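/- The subalgebra of an IFG power set algebra generated by pairs of suits consists of pairs of suits: the constants 0, 1, D_ij are pairs of suits, and if X and Y are pairs of suits then so are ∼X, X +_J Y, X ·_J Y, and C_{n,J}(X). -/

import Mathlib

/-- Two valuations agree outside `J`: they take the same values on all coordinates not in `J`. -/
def AgreeOutside {ι A : Type*} (J : Set ι) (a b : ι → A) : Prop :=
  ∀ i, i ∉ J → a i = b i

/-- `𝒰` is a `J`-saturated disjoint cover of `V`. -/
def IsSatDisjCover {ι A : Type*} (J : Set ι) (V : Set (ι → A))
    (𝒰 : Set (Set (ι → A))) : Prop :=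
  ⋃₀ 𝒰 = V ∧ 𝒰.Pairwise Disjoint ∧
    ∀ a ∈ V, ∀ b ∈ V, AgreeOutside J a b → ∀ U ∈ 𝒰, a ∈ U → b ∈ U

/-- `V = V₁ ∪_J V₂`: a `J`-saturated disjoint (binary) cover of `V`. -/
def UnionJ {ι A : Type*} (J : Set ι) (V V₁ V₂ : Set (ι → A)) : Prop :=
  V₁ ∪ V₂ = V ∧ Disjoint V₁ V₂ ∧
    ∀ a ∈ V, ∀ b ∈ V, AgreeOutside J a b →
      ((a ∈ V₁ → b ∈ V₁) ∧ (a ∈ V₂ → b ∈ V₂))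

/-- `f : V → A` is independent of `J`. -/
def IndepOf {ι A : Type*} (J : Set ι) (V : Set (ι → A)) (f : (ι → A) → A) : Prop :=
  ∀ a ∈ V, ∀ b ∈ V, AgreeOutside J a b → f a = f b

/-- `V(n:f) = { ⃗a(n : f ⃗a) : ⃗a ∈ V }`. -/
def teamUpd {ι A : Type*} [DecidableEq ι] (n : ι) (f : (ι → A) → A)
    (V : Set (ι → A)) : Set (ι → A) :=
  (fun a => Function.update a n (f a)) '' V

/-- `V(n:A) = { ⃗a(n : c) : ⃗a ∈ V, c ∈ A }`. -/
def teamExp {ι A : Type*} [DecidableEq ι] (n : ι) (V : Set (ι → A)) : Set (ι → A) :=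
  {x | ∃ a ∈ V, ∃ c : A, x = Function.update a n c}

/-- An element of an IFG cylindric power set algebra: a pair `⟨X⁺, X⁻⟩` of sets of teams. -/
abbrev IFGElem (ι A : Type*) := Set (Set (ι → A)) × Set (Set (ι → A))

/-- Negation: `∼⟨X⁺, X⁻⟩ = ⟨X⁻, X⁺⟩`. -/
def ifgNeg {ι A : Type*} (X : IFGElem ι A) : IFGElem ι A := (X.2, X.1)

/-- `{V : V = V₁ ∪_J V₂ for some V₁ ∈ S, V₂ ∈ T}`. -/
def plusPos {ι A : Type*} (J : Set ι) (S T : Set (Set (ι → A))) : Set (Set (ι → A)) :=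
  {V | ∃ V₁ ∈ S, ∃ V₂ ∈ T, UnionJ J V V₁ V₂}

/-- The operation `X +_J Y`. -/
def ifgPlus {ι A : Type*} (J : Set ι) (X Y : IFGElem ι A) : IFGElem ι A :=
  (plusPos J X.1 Y.1, X.2 ∩ Y.2)

/-- The operation `X ·_J Y`. -/
def ifgTimes {ι A : Type*} (J : Set ι) (X Y : IFGElem ι A) : IFGElem ι A :=
  (X.1 ∩ Y.1, plusPos J X.2 Y.2)

/-- The cylindrification `C_{n,J}(X)`. -/
def ifgCyl {ι A : Type*} [DecidableEq ι] (n : ι) (J : Set ι) (X : IFGElem ι A) :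
    IFGElem ι A :=
  ({V | ∃ f, IndepOf J V f ∧ teamUpd n f V ∈ X.1}, {W | teamExp n W ∈ X.2})

/-- The constant `0`. -/
def ifgZero {ι A : Type*} : IFGElem ι A := ({∅}, Set.univ)

/-- The constant `1`. -/
def ifgOne {ι A : Type*} : IFGElem ι A := (Set.univ, {∅})

/-- The diagonal element `D_{ij}`. -/
def ifgD {ι A : Type*} (i j : ι) : IFGElem ι A :=
  ({V | ∀ a ∈ V, a i = a j}, {V | ∀ a ∈ V, a i ≠ a j})

/-- A suit: a nonempty collection of teams closed under subsets. -/
def IsSuit {ι A : Type*} (S : Set (Set (ι → A))) : Prop :=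
  S.Nonempty ∧ ∀ V ∈ S, ∀ V' ⊆ V, V' ∈ S

/-- A pair of suits. -/
def IsPairOfSuits {ι A : Type*} (X : IFGElem ι A) : Prop :=
  IsSuit X.1 ∧ IsSuit X.2

/-- A double suit: a pair of suits with `X⁺ ∩ X⁻ = {∅}`. -/
def IsDoubleSuit {ι A : Type*} (X : IFGElem ι A) : Prop :=
  IsPairOfSuits X ∧ X.1 ∩ X.2 = {∅}

lemma IsSuit.empty_mem {ι A : Type*} {S : Set (Set (ι → A))} (h : IsSuit S) : ∅ ∈ S := by
  obtain ⟨⟨V, hV⟩, hcl⟩ := h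
  exact hcl V hV ∅ (Set.empty_subset V)

lemma unionJ_empty {ι A : Type*} (J : Set ι) :
    UnionJ J (∅ : Set (ι → A)) ∅ ∅ :=
  ⟨Set.union_empty _, disjoint_bot_left, fun a ha => absurd ha (Set.notMem_empty a)⟩

lemma isSuit_plusPos {ι A : Type*} (J : Set ι) {S T : Set (Set (ι → A))}
    (hS : IsSuit S) (hT : IsSuit T) : IsSuit (plusPos J S T) := by
  constructor
  · exact ⟨∅, ∅, hS.empty_mem, ∅, hT.empty_mem, unionJ_empty J⟩
  · rintro V ⟨V₁, hV₁, V₂, hV₂, hu, hd, hsat⟩ V' hV'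
    refine ⟨V₁ ∩ V', hS.2 _ hV₁ _ Set.inter_subset_left,
           V₂ ∩ V', hT.2 _ hV₂ _ Set.inter_subset_left, ?_, ?_, ?_⟩
    · rw [← Set.union_inter_distrib_right, hu, Set.inter_eq_right.mpr hV']
    · exact (hd.mono Set.inter_subset_left Set.inter_subset_left)
    · intro a ha b hb hab
      have h := hsat a (hV' ha) b (hV' hb) hab
      exact ⟨fun h1 => ⟨h.1 h1.1, hb⟩, fun h2 => ⟨h.2 h2.1, hb⟩⟩

lemma isSuit_inter {ι A : Type*} {S T : Set (Set (ι → A))}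
    (hS : IsSuit S) (hT : IsSuit T) : IsSuit (S ∩ T) := by
  refine ⟨⟨∅, hS.empty_mem, hT.empty_mem⟩, ?_⟩
  rintro V ⟨h1, h2⟩ V' hV'
  exact ⟨hS.2 V h1 V' hV', hT.2 V h2 V' hV'⟩

/-- The constants are pairs of suits and the operations preserve pairs of suits; hence
the subalgebra generated by pairs of suits consists of pairs of suits. -/
theorem pairsOfSuits_closed {ι A : Type*} [DecidableEq ι] :
    IsPairOfSuits (ifgZero : IFGElem ι A) ∧
    IsPairOfSuits (ifgOne : IFGElem ι A) ∧
    (∀ i j : ι, IsPairOfSuits (ifgD i j : IFGElem ι A)) ∧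
    (∀ X : IFGElem ι A, IsPairOfSuits X → IsPairOfSuits (ifgNeg X)) ∧
    (∀ (J : Set ι) (X Y : IFGElem ι A), IsPairOfSuits X → IsPairOfSuits Y →
      IsPairOfSuits (ifgPlus J X Y)) ∧
    (∀ (J : Set ι) (X Y : IFGElem ι A), IsPairOfSuits X → IsPairOfSuits Y →
      IsPairOfSuits (ifgTimes J X Y)) ∧
    (∀ (n : ι) (J : Set ι) (X : IFGElem ι A), IsPairOfSuits X →
      IsPairOfSuits (ifgCyl n J X)) := by
  have hsingle : IsSuit ({∅} : Set (Set (ι → A))) := by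
    refine ⟨⟨∅, rfl⟩, ?_⟩
    rintro V rfl V' hV'
    exact Set.subset_empty_iff.mp hV'
  have huniv : IsSuit (Set.univ : Set (Set (ι → A))) :=
    ⟨⟨∅, trivial⟩, fun _ _ _ _ => trivial⟩
  refine ⟨⟨hsingle, huniv⟩, ⟨huniv, hsingle⟩, ?_, ?_, ?_, ?_, ?_⟩
  · intro i j
    constructor
    · exact ⟨⟨∅, fun a ha => absurd ha (Set.notMem_empty a)⟩,
        fun V hV V' hV' a ha => hV a (hV' ha)⟩
    · exact ⟨⟨∅, fun a ha => absurd ha (Set.notMem_empty a)⟩,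
        fun V hV V' hV' a ha => hV a (hV' ha)⟩
  · rintro X ⟨h1, h2⟩; exact ⟨h2, h1⟩
  · rintro J X Y ⟨hX1, hX2⟩ ⟨hY1, hY2⟩
    exact ⟨isSuit_plusPos J hX1 hY1, isSuit_inter hX2 hY2⟩
  · rintro J X Y ⟨hX1, hX2⟩ ⟨hY1, hY2⟩
    exact ⟨isSuit_inter hX1 hY1, isSuit_plusPos J hX2 hY2⟩
  · rintro n J X ⟨hX1, hX2⟩
    constructor
    · constructor
      · refine ⟨∅, fun a : ι → A => a n, fun a ha => absurd ha (Set.notMem_empty a), ?_⟩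
        have : teamUpd n (fun a : ι → A => a n) (∅ : Set (ι → A)) = ∅ := by
          simp [teamUpd]
        rw [this]; exact hX1.empty_mem
      · rintro V ⟨f, hf, hmem⟩ V' hV'
        refine ⟨f, fun a ha b hb hab => hf a (hV' ha) b (hV' hb) hab, ?_⟩
        exact hX1.2 _ hmem _ (Set.image_mono hV')
    · constructor
      · refine ⟨∅, ?_⟩
        have : teamExp n (∅ : Set (ι → A)) = ∅ := by
          simp [teamExp]
        show teamExp n (∅ : Set (ι → A)) ∈ X.2
        rw [this]; exact hX2.empty_mem
      · intro W hW W' hW'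
        refine hX2.2 _ hW _ ?_
        rintro x ⟨a, ha, c, rfl⟩
        exact ⟨a, hW' ha, c, rfl⟩
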